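/- arXiv:2108.09612 — 5 statements merged into one kernel-verified Lean document; each statement's English description precedes it below -/
import Mathlib

section
/- Let H, λ, λ1 be positive integers and m a nonnegative integer with λ1 ≤ λ, 1 ≤ λ1, λ - λ1 ≤ m, λ1 ≤ H - m, and m + λ1 ≤ H. Then C(H-1, m)·C(H-m-1, λ1-1)·C(m, λ-λ1) + C(H-1, m-1)·C(H-m, λ1)·C(m-1, λ-λ1-1) = (λ/H)·C(H, m)·C(H-m, λ1)·C(m, λ-λ1), i.e., H·[C(H-1,m)·C(H-m-1,λ1-1)·C(m,λ-λ1) + C(H-1,m-1)·C(H-m,λ1)·C(m-1,λ-λ1-1)] = λ·C(H,m)·C(H-m,λ1)·C(m,λ-λ1). -/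
/-- Binomial coefficient with integer arguments, following the convention that
`C(n,k) = 0` whenever `k < 0` or `k > n` (in particular when `n < 0 ≤ k`). -/
def zchoose (n k : ℤ) : ℕ := if 0 ≤ k ∧ k ≤ n then n.toNat.choose k.toNat else 0

lemma zchoose_coe (a b : ℕ) (h : b ≤ a) : zchoose (a : ℤ) (b : ℤ) = a.choose b := by
  simp [zchoose, Int.ofNat_le.mpr h]

lemma key2 (n k : ℕ) (hk : 1 ≤ k) (hn : k ≤ n) :
    k * n.choose k = n * (n - 1).choose (k - 1) := by
  obtain ⟨n, rfl⟩ : ∃ n', n = n' + 1 := ⟨n - 1, by omega⟩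
  obtain ⟨k, rfl⟩ : ∃ k', k = k' + 1 := ⟨k - 1, by omega⟩
  simp only [Nat.add_sub_cancel]
  rw [mul_comm, ← Nat.add_one_mul_choose_eq]

lemma key1 (n k : ℕ) (h : k < n) :
    (n - k) * n.choose k = n * (n - 1).choose k := by
  have h1 := key2 n (n - k) (by omega) (by omega)
  rwa [Nat.choose_symm (le_of_lt h),
    show n - k - 1 = (n - 1) - k by omega,
    Nat.choose_symm (by omega : k ≤ n - 1)] at h1

/-- `H·[C(H-1,m)·C(H-m-1,λ1-1)·C(m,λ-λ1) + C(H-1,m-1)·C(H-m,λ1)·C(m-1,λ-λ1-1)]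
      = λ·C(H,m)·C(H-m,λ1)·C(m,λ-λ1)` for positive `H, λ, λ1` and nonnegative `m`
with `λ1 ≤ λ`, `1 ≤ λ1`, `λ - λ1 ≤ m`, `λ1 ≤ H - m`, `m + λ1 ≤ H`. -/
theorem stmt1 (H lam lam1 m : ℕ) (hH : 0 < H) (hlam : 0 < lam) (hlam1 : 1 ≤ lam1)
    (h11 : lam1 ≤ lam) (h2 : lam - lam1 ≤ m) (h3 : lam1 ≤ H - m) (h4 : m + lam1 ≤ H) :
    H * (zchoose ((H : ℤ) - 1) (m : ℤ) * zchoose ((H : ℤ) - m - 1) ((lam1 : ℤ) - 1)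
            * zchoose (m : ℤ) ((lam : ℤ) - lam1)
        + zchoose ((H : ℤ) - 1) ((m : ℤ) - 1) * zchoose ((H : ℤ) - m) (lam1 : ℤ)
            * zchoose ((m : ℤ) - 1) ((lam : ℤ) - lam1 - 1))
      = lam * (zchoose (H : ℤ) (m : ℤ) * zchoose ((H : ℤ) - m) (lam1 : ℤ)
            * zchoose (m : ℤ) ((lam : ℤ) - lam1)) := by
  set k := lam - lam1 with hk
  have hlamk : lam = lam1 + k := by omega
  -- rewrite the integer arguments as casts of natural numbers
  have e1 : (H : ℤ) - 1 = ((H - 1 : ℕ) : ℤ) := by omega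
  have e2 : (H : ℤ) - m - 1 = ((H - m - 1 : ℕ) : ℤ) := by omega
  have e3 : (lam1 : ℤ) - 1 = ((lam1 - 1 : ℕ) : ℤ) := by omega
  have e4 : (lam : ℤ) - lam1 = (k : ℤ) := by omega
  have e5 : (H : ℤ) - m = ((H - m : ℕ) : ℤ) := by omega
  rw [e1, e2, e3, e4, e5]
  rw [zchoose_coe (H - 1) m (by omega), zchoose_coe (H - m - 1) (lam1 - 1) (by omega),
    zchoose_coe m k (by omega), zchoose_coe (H - m) lam1 (by omega),
    zchoose_coe H m (by omega)]
  -- key identities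
  have K1 : (H - m) * H.choose m = H * (H - 1).choose m := key1 H m (by omega)
  have K2 : lam1 * (H - m).choose lam1 = (H - m) * (H - m - 1).choose (lam1 - 1) :=
    key2 (H - m) lam1 hlam1 (by omega)
  by_cases hk0 : k = 0
  · rw [show ((k : ℤ) - 1) = -1 by omega,
      show zchoose ((m : ℤ) - 1) (-1) = 0 by simp [zchoose], hlamk, hk0]
    simp only [Nat.choose_zero_right, mul_one, mul_zero, add_zero, Nat.add_zero]
    calc H * ((H - 1).choose m * (H - m - 1).choose (lam1 - 1))
        = (H * (H - 1).choose m) * (H - m - 1).choose (lam1 - 1) := by ring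
      _ = ((H - m) * H.choose m) * (H - m - 1).choose (lam1 - 1) := by rw [K1]
      _ = H.choose m * ((H - m) * (H - m - 1).choose (lam1 - 1)) := by ring
      _ = H.choose m * (lam1 * (H - m).choose lam1) := by rw [K2]
      _ = lam1 * (H.choose m * (H - m).choose lam1) := by ring
  · -- k ≥ 1, hence m ≥ 1
    have hk1 : 1 ≤ k := by omega
    have hm1 : 1 ≤ m := by omega
    have e6 : (m : ℤ) - 1 = ((m - 1 : ℕ) : ℤ) := by omega
    have e7 : (k : ℤ) - 1 = ((k - 1 : ℕ) : ℤ) := by omega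
    rw [e6, e7, zchoose_coe (H - 1) (m - 1) (by omega) ,
      zchoose_coe (m - 1) (k - 1) (by omega)]
    have K3 : m * H.choose m = H * (H - 1).choose (m - 1) := key2 H m hm1 (by omega)
    have K4 : k * m.choose k = m * (m - 1).choose (k - 1) := key2 m k hk1 (by omega)
    rw [hlamk]
    have T1 : H * ((H - 1).choose m * (H - m - 1).choose (lam1 - 1) * m.choose k)
        = lam1 * (H.choose m * (H - m).choose lam1 * m.choose k) := by
      calc H * ((H - 1).choose m * (H - m - 1).choose (lam1 - 1) * m.choose k)
          = (H * (H - 1).choose m) * (H - m - 1).choose (lam1 - 1) * m.choose k := by ring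
        _ = ((H - m) * H.choose m) * (H - m - 1).choose (lam1 - 1) * m.choose k := by rw [K1]
        _ = H.choose m * ((H - m) * (H - m - 1).choose (lam1 - 1)) * m.choose k := by ring
        _ = H.choose m * (lam1 * (H - m).choose lam1) * m.choose k := by rw [K2]
        _ = lam1 * (H.choose m * (H - m).choose lam1 * m.choose k) := by ring
    have T2 : H * ((H - 1).choose (m - 1) * (H - m).choose lam1 * (m - 1).choose (k - 1))
        = k * (H.choose m * (H - m).choose lam1 * m.choose k) := by
      calc H * ((H - 1).choose (m - 1) * (H - m).choose lam1 * (m - 1).choose (k - 1))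
          = (H * (H - 1).choose (m - 1)) * (H - m).choose lam1 * (m - 1).choose (k - 1) := by
            ring
        _ = (m * H.choose m) * (H - m).choose lam1 * (m - 1).choose (k - 1) := by rw [K3]
        _ = H.choose m * (H - m).choose lam1 * (m * (m - 1).choose (k - 1)) := by ring
        _ = H.choose m * (H - m).choose lam1 * (k * m.choose k) := by rw [K4]
        _ = k * (H.choose m * (H - m).choose lam1 * m.choose k) := by ring
    rw [mul_add, T1, T2, add_mul]
end

section
/- Given a (K1, F1, Z1, S1) PDA P = (p_{j1,k1}) and a (K2, F2, Z2, S2) PDA A = (a_{j2,k2}), define the (F1·F2) × (K1·K2) array L by L_{(j1,j2),(k1,k2)} = a_{j2,k2} + (p_{j1,k1} - 1)·S2 if both p_{j1,k1} and a_{j2,k2} are integers, and L_{(j1,j2),(k1,k2)} = * otherwise. Then L is a (K1·K2, F1·F2, Z1·F2 + (F1-Z1)·Z2, S1·S2) PDA. -/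
open scoped Classical

/-- A `(K, F, Z, S)` placement delivery array: an `F × K` array (rows `ι`, columns `κ`)
over `[S] ∪ {*}` (stars encoded as `none`), satisfying:
every integer entry lies in `[S]`; (C1) each column has exactly `Z` stars;
(C2) each integer of `[S]` appears at least once; (C3) equal integer entries lie in
distinct rows and columns, with stars at the two crossed positions. -/
def IsPDA {ι κ : Type*} [Fintype ι] [Fintype κ] (Z S : ℕ) (P : ι → κ → Option ℕ) : Prop :=
  (∀ j k s, P j k = some s → 1 ≤ s ∧ s ≤ S) ∧
  (∀ k, (Finset.univ.filter (fun j => P j k = none)).card = Z) ∧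
  (∀ s, 1 ≤ s → s ≤ S → ∃ j k, P j k = some s) ∧
  (∀ j₁ k₁ j₂ k₂ s, P j₁ k₁ = some s → P j₂ k₂ = some s → (j₁, k₁) ≠ (j₂, k₂) →
    j₁ ≠ j₂ ∧ k₁ ≠ k₂ ∧ P j₁ k₂ = none ∧ P j₂ k₁ = none)

/-- The product array `L_{(j1,j2),(k1,k2)} = a_{j2,k2} + (p_{j1,k1} - 1)·S2` when both
entries are integers, and `*` otherwise. -/
def prodPDA {ι₁ κ₁ ι₂ κ₂ : Type*} (S₂ : ℕ)
    (P : ι₁ → κ₁ → Option ℕ) (A : ι₂ → κ₂ → Option ℕ) :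
    ι₁ × ι₂ → κ₁ × κ₂ → Option ℕ :=
  fun j k =>
    match P j.1 k.1, A j.2 k.2 with
    | some s₁, some s₂ => some (s₂ + (s₁ - 1) * S₂)
    | _, _ => none

lemma prod_none_iff {ι₁ κ₁ ι₂ κ₂ : Type*} (S₂ : ℕ)
    (P : ι₁ → κ₁ → Option ℕ) (A : ι₂ → κ₂ → Option ℕ) (j : ι₁ × ι₂) (k : κ₁ × κ₂) :
    prodPDA S₂ P A j k = none ↔ P j.1 k.1 = none ∨ A j.2 k.2 = none := by
  unfold prodPDA
  rcases h1 : P j.1 k.1 with _ | s₁ <;> rcases h2 : A j.2 k.2 with _ | s₂ <;> simp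

lemma prod_some_iff {ι₁ κ₁ ι₂ κ₂ : Type*} (S₂ : ℕ)
    (P : ι₁ → κ₁ → Option ℕ) (A : ι₂ → κ₂ → Option ℕ) (j : ι₁ × ι₂) (k : κ₁ × κ₂) (s : ℕ) :
    prodPDA S₂ P A j k = some s ↔
      ∃ s₁ s₂, P j.1 k.1 = some s₁ ∧ A j.2 k.2 = some s₂ ∧ s = s₂ + (s₁ - 1) * S₂ := by
  unfold prodPDA
  rcases h1 : P j.1 k.1 with _ | s₁ <;> rcases h2 : A j.2 k.2 with _ | s₂ <;>
    simp [eq_comm]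

lemma code_inj {S₂ s₁ s₂ t₁ t₂ : ℕ} (hs₁ : 1 ≤ s₁) (hs₂ : 1 ≤ s₂) (hs₂' : s₂ ≤ S₂)
    (ht₁ : 1 ≤ t₁) (ht₂ : 1 ≤ t₂) (ht₂' : t₂ ≤ S₂)
    (h : s₂ + (s₁ - 1) * S₂ = t₂ + (t₁ - 1) * S₂) : s₁ = t₁ ∧ s₂ = t₂ := by
  have h' : (s₂ - 1) + (s₁ - 1) * S₂ = (t₂ - 1) + (t₁ - 1) * S₂ := by omega
  have h2 : s₂ - 1 < S₂ := by omega
  have h3 : t₂ - 1 < S₂ := by omega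
  have e1 : ((s₂ - 1) + (s₁ - 1) * S₂) % S₂ = s₂ - 1 := by
    rw [Nat.add_mul_mod_self_right, Nat.mod_eq_of_lt h2]
  have e2 : ((t₂ - 1) + (t₁ - 1) * S₂) % S₂ = t₂ - 1 := by
    rw [Nat.add_mul_mod_self_right, Nat.mod_eq_of_lt h3]
  have : s₂ - 1 = t₂ - 1 := by rw [← e1, ← e2, h']
  have hs : s₂ = t₂ := by omega
  subst hs
  have : (s₁ - 1) * S₂ = (t₁ - 1) * S₂ := by omega
  have hS : 0 < S₂ := by omega
  have := Nat.eq_of_mul_eq_mul_right hS this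
  omega

/-- The product of a `(K1,F1,Z1,S1)` PDA and a `(K2,F2,Z2,S2)` PDA is a
`(K1·K2, F1·F2, Z1·F2 + (F1-Z1)·Z2, S1·S2)` PDA. -/
theorem stmt4 {F₁ K₁ F₂ K₂ Z₁ S₁ Z₂ S₂ : ℕ}
    (P : Fin F₁ → Fin K₁ → Option ℕ) (A : Fin F₂ → Fin K₂ → Option ℕ)
    (hP : IsPDA Z₁ S₁ P) (hA : IsPDA Z₂ S₂ A) :
    IsPDA (Z₁ * F₂ + (F₁ - Z₁) * Z₂) (S₁ * S₂) (prodPDA S₂ P A) := by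
  obtain ⟨hP1, hP2, hP3, hP4⟩ := hP
  obtain ⟨hA1, hA2, hA3, hA4⟩ := hA
  refine ⟨?_, ?_, ?_, ?_⟩
  · -- bounds
    rintro j k s hs
    rw [prod_some_iff] at hs
    obtain ⟨s₁, s₂, h1, h2, rfl⟩ := hs
    obtain ⟨hs₁, hs₁'⟩ := hP1 _ _ _ h1
    obtain ⟨hs₂, hs₂'⟩ := hA1 _ _ _ h2
    constructor
    · omega
    · calc s₂ + (s₁ - 1) * S₂ ≤ S₂ + (S₁ - 1) * S₂ := by
            have : (s₁ - 1) * S₂ ≤ (S₁ - 1) * S₂ := Nat.mul_le_mul_right _ (by omega)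
            omega
        _ = S₁ * S₂ := by
            have : 1 ≤ S₁ := hs₁.trans hs₁'
            cases S₁ with
            | zero => omega
            | succ n => simp [Nat.succ_mul]; ring
  · -- star count
    intro k
    have hset : (Finset.univ.filter (fun j : Fin F₁ × Fin F₂ => prodPDA S₂ P A j k = none))
        = ((Finset.univ.filter (fun j₁ => P j₁ k.1 = none)) ×ˢ (Finset.univ : Finset (Fin F₂)))
          ∪ ((Finset.univ.filter (fun j₁ => ¬ P j₁ k.1 = none)) ×ˢ
              (Finset.univ.filter (fun j₂ => A j₂ k.2 = none))) := by
      ext j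
      simp only [Finset.mem_filter, Finset.mem_union, Finset.mem_product, Finset.mem_univ,
        true_and, and_true, prod_none_iff]
      tauto
    rw [hset, Finset.card_union_of_disjoint, Finset.card_product, Finset.card_product]
    · have h1 : (Finset.univ.filter (fun j₁ => P j₁ k.1 = none)).card = Z₁ := hP2 k.1
      have h2 : (Finset.univ.filter (fun j₂ => A j₂ k.2 = none)).card = Z₂ := hA2 k.2
      have h3 : (Finset.univ.filter (fun j₁ => P j₁ k.1 = none)).card +
          (Finset.univ.filter (fun j₁ => ¬ P j₁ k.1 = none)).card = F₁ := by
        rw [Finset.card_filter_add_card_filter_not]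
        simp
      rw [h1, h2, Finset.card_univ, Fintype.card_fin]
      have : (Finset.univ.filter (fun j₁ => ¬ P j₁ k.1 = none)).card = F₁ - Z₁ := by omega
      rw [this]
    · rw [Finset.disjoint_left]
      rintro j hj hj'
      simp only [Finset.mem_product, Finset.mem_filter, Finset.mem_univ, true_and,
        and_true] at hj hj'
      exact hj'.1 hj
  · -- surjectivity
    intro s hs1 hs2
    have hS₂ : 0 < S₂ := by
      rcases Nat.eq_zero_or_pos S₂ with h | h
      · subst h; rw [Nat.mul_zero] at hs2; omega
      · exact h
    have hs₂b : 1 ≤ (s - 1) % S₂ + 1 ∧ (s - 1) % S₂ + 1 ≤ S₂ := by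
      have := Nat.mod_lt (s - 1) hS₂
      omega
    have hs₁b : 1 ≤ (s - 1) / S₂ + 1 ∧ (s - 1) / S₂ + 1 ≤ S₁ := by
      have h2 : (s - 1) / S₂ < S₁ := by
        rw [Nat.div_lt_iff_lt_mul hS₂]
        have : S₁ * S₂ = S₂ * S₁ := Nat.mul_comm _ _
        omega
      exact ⟨Nat.le_add_left 1 _, by omega⟩
    obtain ⟨j₁, k₁, hj₁⟩ := hP3 _ hs₁b.1 hs₁b.2
    obtain ⟨j₂, k₂, hj₂⟩ := hA3 _ hs₂b.1 hs₂b.2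
    refine ⟨(j₁, j₂), (k₁, k₂), ?_⟩
    rw [prod_some_iff]
    refine ⟨_, _, hj₁, hj₂, ?_⟩
    rw [Nat.add_sub_cancel, Nat.mul_comm]
    have := Nat.div_add_mod (s - 1) S₂
    omega
  · -- C3
    rintro ⟨j₁, j₂⟩ ⟨k₁, k₂⟩ ⟨j₁', j₂'⟩ ⟨k₁', k₂'⟩ s h1 h2 hne
    rw [prod_some_iff] at h1 h2
    obtain ⟨s₁, s₂, hp, ha, rfl⟩ := h1
    obtain ⟨t₁, t₂, hp', ha', heq⟩ := h2
    simp only at hp ha hp' ha' heq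
    obtain ⟨hb₁, hb₁'⟩ := hP1 _ _ _ hp
    obtain ⟨hb₂, hb₂'⟩ := hA1 _ _ _ ha
    obtain ⟨hc₁, hc₁'⟩ := hP1 _ _ _ hp'
    obtain ⟨hc₂, hc₂'⟩ := hA1 _ _ _ ha'
    obtain ⟨e1, e2⟩ := code_inj hb₁ hb₂ hb₂' hc₁ hc₂ hc₂' heq
    subst e1; subst e2
    by_cases hPC : (j₁, k₁) = (j₁', k₁')
    · rw [Prod.mk.injEq] at hPC
      obtain ⟨rfl, rfl⟩ := hPC
      have hAC : (j₂, k₂) ≠ (j₂', k₂') := by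
        intro h
        apply hne
        rw [Prod.mk.injEq] at h
        simp [h.1, h.2]
      obtain ⟨d1, d2, d3, d4⟩ := hA4 _ _ _ _ _ ha ha' hAC
      refine ⟨?_, ?_, ?_, ?_⟩
      · exact fun h => d1 (congrArg Prod.snd h)
      · exact fun h => d2 (congrArg Prod.snd h)
      · rw [prod_none_iff]; right; exact d3
      · rw [prod_none_iff]; right; exact d4
    · obtain ⟨d1, d2, d3, d4⟩ := hP4 _ _ _ _ _ hp hp' hPC
      refine ⟨?_, ?_, ?_, ?_⟩
      · exact fun h => d1 (congrArg Prod.fst h)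
      · exact fun h => d2 (congrArg Prod.fst h)
      · rw [prod_none_iff]; left; exact d3
      · rw [prod_none_iff]; left; exact d4
end

section
/- Let H, r, a, ω, λ be positive integers with max{ω, λ} ≤ r < H and a < H. Define the array P with rows indexed by binary vectors f ∈ {0,1}^H of weight a, and columns indexed by pairs (T, b) with T ∈ ([H] choose r) and b ∈ {0,1}^r of weight r-ω, where P_{f,(T,b)} = (e, C) if d(f|_T, b) = r - λ (with e agreeing with b on T and with f off T, and C = {δ_v ∈ T : f_{δ_v} = b_v}), and P_{f,(T,b)} = * otherwise. Then P satisfies condition C3 of a PDA: if P_{f,(T,b)} = P_{f',(T',b')} = (e, C) are two equal non-star entries at distinct positions, then f ≠ f', (T,b) ≠ (T',b'), and P_{f,(T',b')} = P_{f',(T,b)} = *. -/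
open scoped Classical

/-- Hamming weight of a binary vector of length `H`. -/
def wt {H : ℕ} (f : Fin H → Bool) : ℕ :=
  (Finset.univ.filter (fun i => f i = true)).card

/-- Hamming distance `d(f|_T, b)` between the restrictions to `T` of `f` and `b`. -/
def distOn {H : ℕ} (T : Finset (Fin H)) (f b : Fin H → Bool) : ℕ :=
  (T.filter (fun i => f i ≠ b i)).card

/-- The agreement set `C = {i ∈ T : f_i = b_i}`. -/
def agreeSet {H : ℕ} (T : Finset (Fin H)) (f b : Fin H → Bool) : Finset (Fin H) :=
  T.filter (fun i => f i = b i)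

/-- The vector `e` agreeing with `b` on `T` and with `f` off `T`. -/
def mixVec {H : ℕ} (T : Finset (Fin H)) (f b : Fin H → Bool) : Fin H → Bool :=
  fun i => if i ∈ T then b i else f i

lemma dist_add_agree {H : ℕ} (T : Finset (Fin H)) (f b : Fin H → Bool) :
    distOn T f b + (agreeSet T f b).card = T.card := by
  classical
  unfold distOn agreeSet
  rw [Nat.add_comm]
  simpa using Finset.card_filter_add_card_filter_not (s := T)
    (p := fun i => f i = b i)

lemma subset_of_eq_row {H : ℕ} (T T' : Finset (Fin H)) (f b b' e : Fin H → Bool)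
    (heT : ∀ i ∈ T, b i = e i) (heO' : ∀ i ∉ T', f i = e i)
    (hCeq : agreeSet T f b = agreeSet T' f b') : T ⊆ T' := by
  intro i hi
  by_cases hfe : f i = e i
  · have h1 : i ∈ agreeSet T f b :=
      Finset.mem_filter.mpr ⟨hi, by rw [hfe, ← heT i hi]⟩
    rw [hCeq] at h1
    exact (Finset.mem_filter.mp h1).1
  · by_contra hi'
    exact hfe (heO' i hi')

lemma agree_cross {H : ℕ} (T T' : Finset (Fin H)) (f f' b b' e : Fin H → Bool)
    (heT : ∀ i ∈ T, b i = e i) (heO : ∀ i ∉ T, f i = e i)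
    (heT' : ∀ i ∈ T', b' i = e i) (heO' : ∀ i ∉ T', f' i = e i)
    (hCeq : agreeSet T f b = agreeSet T' f' b') :
    agreeSet T' f b' = agreeSet T' f' b' ∪ (T' \ T) := by
  ext i
  simp only [agreeSet, Finset.mem_filter, Finset.mem_union, Finset.mem_sdiff]
  constructor
  · rintro ⟨hi', hfb⟩
    by_cases hi : i ∈ T
    · left
      have h1 : f i = b i := by rw [heT i hi, ← heT' i hi', ← hfb]
      have h2 : i ∈ agreeSet T' f' b' := by
        rw [← hCeq]; exact Finset.mem_filter.mpr ⟨hi, h1⟩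
      exact Finset.mem_filter.mp h2
    · exact Or.inr ⟨hi', hi⟩
  · rintro (⟨hi', hf'b⟩ | ⟨hi', hi⟩)
    · have h2 : i ∈ agreeSet T f b := by
        rw [hCeq]; exact Finset.mem_filter.mpr ⟨hi', hf'b⟩
      obtain ⟨hi, h1⟩ := Finset.mem_filter.mp h2
      exact ⟨hi', by rw [h1, heT i hi, heT' i hi']⟩
    · exact ⟨hi', by rw [heO i hi, heT' i hi']⟩

/-- Condition C3 for the array of Construction 1. Rows are `f ∈ {0,1}^H` with
`wt(f) = a`; columns are `(T, b)` with `T` an `r`-subset of `[H]` and `b ∈ {0,1}^r`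
(encoded with `b i = false` off `T`) of weight `r-ω`; the entry at `(f,(T,b))` is the
label `(e, C)` if `d(f|_T, b) = r-λ`, and `*` otherwise. If two positions carry the same
non-star label `(e, C)` and are distinct, then `f ≠ f'`, `(T,b) ≠ (T',b')`, and the two
crossed positions are stars. -/
theorem stmt8 (H r a ω lam : ℕ) (hH : 0 < H) (hr : 0 < r) (ha : 0 < a) (hω : 0 < ω)
    (hl : 0 < lam) (hωr : ω ≤ r) (hlamr : lam ≤ r) (hrH : r < H) (haH : a < H)
    (f f' b b' : Fin H → Bool) (T T' : Finset (Fin H))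
    (hT : T.card = r) (hT' : T'.card = r)
    (hf : wt f = a) (hf' : wt f' = a)
    (hb : (T.filter (fun i => b i = true)).card = r - ω)
    (hb' : (T'.filter (fun i => b' i = true)).card = r - ω)
    (hb0 : ∀ i ∉ T, b i = false) (hb0' : ∀ i ∉ T', b' i = false)
    (hd : distOn T f b = r - lam) (hd' : distOn T' f' b' = r - lam)
    (he : mixVec T f b = mixVec T' f' b')
    (hCeq : agreeSet T f b = agreeSet T' f' b')
    (hne : ¬ (f = f' ∧ T = T' ∧ b = b')) :
    f ≠ f' ∧ (T, b) ≠ (T', b')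
      ∧ distOn T' f b' ≠ r - lam ∧ distOn T f' b ≠ r - lam := by
  classical
  have heT : ∀ i ∈ T, b i = mixVec T f b i := fun i hi => by simp [mixVec, hi]
  have heO : ∀ i ∉ T, f i = mixVec T f b i := fun i hi => by simp [mixVec, hi]
  have heT' : ∀ i ∈ T', b' i = mixVec T f b i := fun i hi => by
    rw [he]; simp [mixVec, hi]
  have heO' : ∀ i ∉ T', f' i = mixVec T f b i := fun i hi => by
    rw [he]; simp [mixVec, hi]
  -- T = T' implies b = b'
  have hTb : T = T' → b = b' := by
    intro h
    funext i
    by_cases hi : i ∈ T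
    · rw [heT i hi, heT' i (h ▸ hi)]
    · rw [hb0 i hi, hb0' i (h ▸ hi)]
  -- T = T' and b = b' imply f = f'
  have hbf : T = T' → b = b' → f = f' := by
    intro hTT hbb
    funext i
    by_cases hi : i ∈ T
    · have h1 : (f i = b i) ↔ (f' i = b i) := by
        constructor
        · intro h
          have h2 : i ∈ agreeSet T' f' b' := by
            rw [← hCeq]; exact Finset.mem_filter.mpr ⟨hi, h⟩
          have h3 := (Finset.mem_filter.mp h2).2
          rw [hbb]; exact h3
        · intro h
          have h2 : i ∈ agreeSet T f b := by
            rw [hCeq]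
            exact Finset.mem_filter.mpr ⟨hTT ▸ hi, by rw [← hbb]; exact h⟩
          exact (Finset.mem_filter.mp h2).2
      by_cases h : f i = b i
      · rw [h]; exact (h1.mp h).symm
      · have h' : ¬ f' i = b i := fun hh => h (h1.mpr hh)
        cases hfi : f i <;> cases hgi : f' i <;> cases hbi : b i <;> simp_all
    · rw [heO i hi, heO' i (hTT ▸ hi)]
  -- f = f' implies T = T'
  have hfT : f = f' → T = T' := by
    intro h
    subst h
    exact Finset.Subset.antisymm
      (subset_of_eq_row T T' f b b' (mixVec T f b) heT heO' hCeq)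
      (subset_of_eq_row T' T f b' b (mixVec T f b) heT' heO hCeq.symm)
  have hTne : T ≠ T' := fun h => hne ⟨hbf h (hTb h), h, hTb h⟩
  have hfne : f ≠ f' := fun h => hTne (hfT h)
  have hCcard : (agreeSet T f b).card = lam := by
    have h1 := dist_add_agree T f b
    have h2 : (agreeSet T f b).card ≤ T.card :=
      Finset.card_le_card (Finset.filter_subset _ _)
    rw [hT, hd] at h1
    rw [hT] at h2
    omega
  have hC'card : (agreeSet T' f' b').card = lam := by rw [← hCeq]; exact hCcard
  have hCsub : agreeSet T' f' b' ⊆ T := by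
    rw [← hCeq]; exact Finset.filter_subset _ _
  have hCsub' : agreeSet T f b ⊆ T' := by
    rw [hCeq]; exact Finset.filter_subset _ _
  refine ⟨hfne, fun h => hTne (congrArg Prod.fst h), ?_, ?_⟩
  · -- distOn T' f b' ≠ r - lam
    have hA := agree_cross T T' f f' b b' (mixVec T f b) heT heO heT' heO' hCeq
    have hdisj : Disjoint (agreeSet T' f' b') (T' \ T) :=
      Finset.disjoint_left.mpr fun i hiC hiS =>
        (Finset.mem_sdiff.mp hiS).2 (hCsub hiC)
    have hcard : (agreeSet T' f b').card = lam + (T' \ T).card := by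
      rw [hA, Finset.card_union_of_disjoint hdisj, hC'card]
    have hne' : (T' \ T).Nonempty := by
      rw [Finset.sdiff_nonempty]
      intro hsub
      exact hTne (Finset.eq_of_subset_of_card_le hsub (by rw [hT, hT'])).symm
    have h3 : 1 ≤ (T' \ T).card := Finset.card_pos.mpr hne'
    have h1 := dist_add_agree T' f b'
    have h2 : (agreeSet T' f b').card ≤ T'.card :=
      Finset.card_le_card (Finset.filter_subset _ _)
    rw [hT'] at h1 h2
    omega
  · -- distOn T f' b ≠ r - lam
    have hA := agree_cross T' T f' f b' b (mixVec T f b) heT' heO' heT heO hCeq.symm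
    have hdisj : Disjoint (agreeSet T f b) (T \ T') :=
      Finset.disjoint_left.mpr fun i hiC hiS =>
        (Finset.mem_sdiff.mp hiS).2 (hCsub' hiC)
    have hcard : (agreeSet T f' b).card = lam + (T \ T').card := by
      rw [hA, Finset.card_union_of_disjoint hdisj, hCcard]
    have hne' : (T \ T').Nonempty := by
      rw [Finset.sdiff_nonempty]
      intro hsub
      exact hTne (Finset.eq_of_subset_of_card_le hsub (by rw [hT, hT']))
    have h3 : 1 ≤ (T \ T').card := Finset.card_pos.mpr hne'
    have h1 := dist_add_agree T f' b
    have h2 : (agreeSet T f' b).card ≤ T.card :=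
      Finset.card_le_card (Finset.filter_subset _ _)
    rw [hT] at h1 h2
    omega
end

section
/- Fix an r-subset T of [H] and b ∈ {0,1}^r with wt(b) = r-ω, where max{ω,λ} ≤ r < H and a < H. The number of binary vectors f ∈ {0,1}^H of weight a such that d(f|_T, b) > r - λ (equivalently d(f|_T, b) = r - λ' for some λ' with 0 ≤ λ' ≤ λ-1) equals Z' = Σ_{λ'=0}^{λ-1} Σ_{λ1 = max{0,λ'-r+ω}}^{min{ω,λ'}} C(ω, λ1)·C(r-ω, λ'-λ1)·C(H-r, a-ω+2λ1-λ'). -/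
open scoped Classical

lemma zchoose_natCast (n k : ℕ) : zchoose (n : ℤ) (k : ℤ) = n.choose k := by
  unfold zchoose
  split
  · simp
  · next h =>
    have : n < k := by omega
    rw [Nat.choose_eq_zero_of_lt this]

open Finset in
lemma count_triple {H : ℕ} (T0 T1 T2 : Finset (Fin H)) (h01 : Disjoint T0 T1)
    (h02 : Disjoint T0 T2) (h12 : Disjoint T1 T2)
    (hcover : T0 ∪ T1 ∪ T2 = Finset.univ) (k0 k1 k2 : ℕ) :
    (Finset.univ.filter (fun f : Fin H → Bool =>
        (T0.filter (fun i => f i = true)).card = k0 ∧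
        (T1.filter (fun i => f i = true)).card = k1 ∧
        (T2.filter (fun i => f i = true)).card = k2)).card
      = T0.card.choose k0 * (T1.card.choose k1 * T2.card.choose k2) := by
  classical
  rw [← Finset.card_powersetCard, ← Finset.card_powersetCard, ← Finset.card_powersetCard,
    ← Finset.card_product, ← Finset.card_product]
  apply Finset.card_bij (fun f _ =>
    ((T0.filter (fun i => f i = true)),
      ((T1.filter (fun i => f i = true)), (T2.filter (fun i => f i = true)))))
  · intro f hf
    simp only [Finset.mem_filter, Finset.mem_univ, true_and] at hf
    simp only [Finset.mem_product, Finset.mem_powersetCard]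
    exact ⟨⟨Finset.filter_subset _ _, hf.1⟩, ⟨Finset.filter_subset _ _, hf.2.1⟩,
      ⟨Finset.filter_subset _ _, hf.2.2⟩⟩
  · intro f hf g hg h
    simp only [Prod.mk.injEq] at h
    obtain ⟨h0, h1, h2⟩ := h
    funext i
    have hi : i ∈ T0 ∪ T1 ∪ T2 := by rw [hcover]; exact Finset.mem_univ i
    simp only [Finset.mem_union] at hi
    have key : ∀ (s : Finset (Fin H)), i ∈ s →
        s.filter (fun j => f j = true) = s.filter (fun j => g j = true) → f i = g i := by
      intro s his hs
      have := Finset.ext_iff.mp hs i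
      simp only [Finset.mem_filter, his, true_and] at this
      cases hf : f i <;> cases hg : g i <;> simp [hf, hg] at this ⊢
    rcases hi with (hi | hi) | hi
    · exact key T0 hi h0
    · exact key T1 hi h1
    · exact key T2 hi h2
  · rintro ⟨A, B, C⟩ hp
    simp only [Finset.mem_product, Finset.mem_powersetCard] at hp
    obtain ⟨⟨hA, hAc⟩, ⟨hB, hBc⟩, ⟨hC, hCc⟩⟩ := hp
    set f : Fin H → Bool := fun i => decide (i ∈ A ∪ B ∪ C) with hf
    have e0 : T0.filter (fun i => f i = true) = A := by
      ext i
      simp only [hf, Finset.mem_filter, decide_eq_true_eq, Finset.mem_union]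
      constructor
      · rintro ⟨hi0, (h | h) | h⟩
        · exact h
        · exact absurd (hB h) (Finset.disjoint_left.mp h01 hi0)
        · exact absurd (hC h) (Finset.disjoint_left.mp h02 hi0)
      · intro h; exact ⟨hA h, Or.inl (Or.inl h)⟩
    have e1 : T1.filter (fun i => f i = true) = B := by
      ext i
      simp only [hf, Finset.mem_filter, decide_eq_true_eq, Finset.mem_union]
      constructor
      · rintro ⟨hi1, (h | h) | h⟩
        · exact absurd (hA h) (Finset.disjoint_right.mp h01 hi1)
        · exact h
        · exact absurd (hC h) (Finset.disjoint_left.mp h12 hi1)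
      · intro h; exact ⟨hB h, Or.inl (Or.inr h)⟩
    have e2 : T2.filter (fun i => f i = true) = C := by
      ext i
      simp only [hf, Finset.mem_filter, decide_eq_true_eq, Finset.mem_union]
      constructor
      · rintro ⟨hi2, (h | h) | h⟩
        · exact absurd (hA h) (Finset.disjoint_right.mp h02 hi2)
        · exact absurd (hB h) (Finset.disjoint_right.mp h12 hi2)
        · exact h
      · intro h; exact ⟨hC h, Or.inr h⟩
    refine ⟨f, Finset.mem_filter.mpr ⟨Finset.mem_univ _, ?_, ?_, ?_⟩, ?_⟩
    · rw [e0]; exact hAc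
    · rw [e1]; exact hBc
    · rw [e2]; exact hCc
    · simp only [Prod.mk.injEq]
      exact ⟨e0, e1, e2⟩

/-- Useless-star count per column of Construction 1. Fix an `r`-subset `T` of `[H]` and
`b ∈ {0,1}^r` of weight `r-ω` (with `max{ω,λ} ≤ r < H`, `a < H`). The number of binary
vectors `f ∈ {0,1}^H` of weight `a` with `d(f|_T, b) > r - λ` equals
`Z' = Σ_{λ'=0}^{λ-1} Σ_{λ1=max{0,λ'-r+ω}}^{min{ω,λ'}}
C(ω,λ1)·C(r-ω,λ'-λ1)·C(H-r, a-ω+2λ1-λ')`. -/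
theorem stmt12 (H r a ω lam : ℕ) (hH : 0 < H) (hr : 0 < r) (ha : 0 < a) (hω : 0 < ω)
    (hl : 0 < lam) (hωr : ω ≤ r) (hlamr : lam ≤ r) (hrH : r < H) (haH : a < H)
    (T : Finset (Fin H)) (hT : T.card = r) (b : Fin H → Bool)
    (hb : (T.filter (fun i => b i = true)).card = r - ω)
    (hb0 : ∀ i ∉ T, b i = false) :
    (Finset.univ.filter (fun f : Fin H → Bool =>
        wt f = a ∧ distOn T f b > r - lam)).card
      = ∑ lam' ∈ Finset.range lam, ∑ lam1 ∈ Finset.Icc (lam' + ω - r) (min ω lam'),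
          zchoose (ω : ℤ) (lam1 : ℤ) * zchoose ((r : ℤ) - ω) ((lam' : ℤ) - lam1)
            * zchoose ((H : ℤ) - r) ((a : ℤ) - ω + 2 * lam1 - lam') := by
  classical
  set T1 : Finset (Fin H) := T.filter (fun i => b i = true) with hT1def
  set T0 : Finset (Fin H) := T.filter (fun i => b i = false) with hT0def
  set T2 : Finset (Fin H) := Finset.univ \ T with hT2def
  have h01 : Disjoint T0 T1 := by
    rw [Finset.disjoint_left]
    intro i hi0 hi1
    rw [hT0def, Finset.mem_filter] at hi0
    rw [hT1def, Finset.mem_filter] at hi1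
    simp [hi0.2] at hi1
  have hT01 : T0 ∪ T1 = T := by
    ext i
    simp only [hT0def, hT1def, Finset.mem_union, Finset.mem_filter]
    cases h : b i <;> tauto
  have hsubT : T0 ∪ T1 ⊆ T := by rw [hT01]
  have h02 : Disjoint T0 T2 := by
    rw [hT2def]
    exact Finset.disjoint_sdiff.mono_left (Finset.filter_subset _ _)
  have h12 : Disjoint T1 T2 := by
    rw [hT2def]
    exact Finset.disjoint_sdiff.mono_left (Finset.filter_subset _ _)
  have hcover : T0 ∪ T1 ∪ T2 = Finset.univ := by
    rw [hT01, hT2def, Finset.union_sdiff_of_subset (Finset.subset_univ T)]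
  have hT1card : T1.card = r - ω := hb
  have hT0card : T0.card = ω := by
    have h := Finset.card_union_of_disjoint h01
    rw [hT01, hT, hT1card] at h
    omega
  have hT2card : T2.card = H - r := by
    rw [hT2def, Finset.card_sdiff_of_subset (Finset.subset_univ T), hT]
    simp
  -- per-f structural facts
  have fact1 : ∀ f : Fin H → Bool, (agreeSet T f b).card + distOn T f b = r := by
    intro f
    rw [agreeSet, distOn, ← hT]
    exact Finset.card_filter_add_card_filter_not _
  have agreeT1_eq : ∀ f : Fin H → Bool,
      T1.filter (fun i => f i = b i) = T1.filter (fun i => f i = true) := by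
    intro f
    apply Finset.filter_congr
    intro i hi
    rw [hT1def, Finset.mem_filter] at hi
    rw [hi.2]
  have agreeT0_eq : ∀ f : Fin H → Bool,
      T0.filter (fun i => f i = b i) = T0.filter (fun i => f i = false) := by
    intro f
    apply Finset.filter_congr
    intro i hi
    rw [hT0def, Finset.mem_filter] at hi
    rw [hi.2]
  have fact2 : ∀ f : Fin H → Bool, (agreeSet T f b).card =
      (T0.filter (fun i => f i = b i)).card + (T1.filter (fun i => f i = true)).card := by
    intro f
    rw [agreeSet, ← hT01, Finset.filter_union,
      Finset.card_union_of_disjoint (h01.mono (Finset.filter_subset _ _) (Finset.filter_subset _ _)),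
      agreeT1_eq]
  have fact3 : ∀ f : Fin H → Bool,
      (T0.filter (fun i => f i = true)).card + (T0.filter (fun i => f i = b i)).card = ω := by
    intro f
    have h := Finset.card_filter_add_card_filter_not
      (s := T0) (p := fun i => f i = true)
    have e : T0.filter (fun i => f i = false) = T0.filter (fun i => ¬ f i = true) := by
      apply Finset.filter_congr
      intro i _
      simp
    rw [agreeT0_eq, e, ← hT0card]
    exact h
  have fact4 : ∀ f : Fin H → Bool, wt f =
      (T0.filter (fun i => f i = true)).card + (T1.filter (fun i => f i = true)).card
        + (T2.filter (fun i => f i = true)).card := by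
    intro f
    have d01 : Disjoint (T0.filter (fun i => f i = true)) (T1.filter (fun i => f i = true)) :=
      Finset.disjoint_filter_filter h01
    have d2 : Disjoint (T0.filter (fun i => f i = true) ∪ T1.filter (fun i => f i = true))
        (T2.filter (fun i => f i = true)) :=
      Finset.disjoint_union_left.mpr
        ⟨Finset.disjoint_filter_filter h02, Finset.disjoint_filter_filter h12⟩
    rw [wt, ← hcover, Finset.filter_union, Finset.filter_union,
      Finset.card_union_of_disjoint d2, Finset.card_union_of_disjoint d01]
  have fact5 : ∀ f : Fin H → Bool, (T1.filter (fun i => f i = true)).card ≤ r - ω := by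
    intro f
    rw [← hT1card]
    exact Finset.card_filter_le _ _
  have fact6 : ∀ f : Fin H → Bool, (T0.filter (fun i => f i = b i)).card ≤ ω := by
    intro f
    rw [← hT0card]
    exact Finset.card_filter_le _ _
  -- Step 1: fiber over lam' = agreement count
  rw [Finset.card_eq_sum_card_fiberwise
    (f := fun f : Fin H → Bool => (agreeSet T f b).card) (t := Finset.range lam) ?_]
  swap
  · intro f hf
    rw [Finset.mem_coe, Finset.mem_filter] at hf
    rw [Finset.mem_coe, Finset.mem_range]
    show (agreeSet T f b).card < lam
    have := fact1 f
    omega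
  apply Finset.sum_congr rfl
  intro lam' hlam'
  rw [Finset.mem_range] at hlam'
  have hfilter1 : (Finset.univ.filter (fun f : Fin H → Bool =>
        wt f = a ∧ distOn T f b > r - lam)).filter
          (fun f => (agreeSet T f b).card = lam')
      = Finset.univ.filter (fun f : Fin H → Bool =>
          wt f = a ∧ (agreeSet T f b).card = lam') := by
    rw [Finset.filter_filter]
    apply Finset.filter_congr
    intro f _
    have := fact1 f
    constructor
    · rintro ⟨⟨hw, _⟩, hag⟩; exact ⟨hw, hag⟩
    · rintro ⟨hw, hag⟩; exact ⟨⟨hw, by omega⟩, hag⟩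
  rw [hfilter1]
  -- Step 2: fiber over lam1 = agreement count on T0
  rw [Finset.card_eq_sum_card_fiberwise
    (f := fun f : Fin H → Bool => (T0.filter (fun i => f i = b i)).card)
    (t := Finset.Icc (lam' + ω - r) (min ω lam')) ?_]
  swap
  · intro f hf
    rw [Finset.mem_coe, Finset.mem_filter] at hf
    obtain ⟨_, _, hag⟩ := hf
    have h2 := fact2 f
    have h5 := fact5 f
    have h6 := fact6 f
    show (T0.filter (fun i => f i = b i)).card ∈ Finset.Icc (lam' + ω - r) (min ω lam')
    rw [Finset.mem_Icc]
    omega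
  apply Finset.sum_congr rfl
  intro lam1 hlam1
  rw [Finset.mem_Icc] at hlam1
  have hlam1ω : lam1 ≤ ω := by omega
  have hlam1l : lam1 ≤ lam' := by omega
  by_cases hcase : ω + lam' ≤ a + 2 * lam1
  · -- nonneg case
    have hfilter2 : (Finset.univ.filter (fun f : Fin H → Bool =>
          wt f = a ∧ (agreeSet T f b).card = lam')).filter
            (fun f => (T0.filter (fun i => f i = b i)).card = lam1)
        = Finset.univ.filter (fun f : Fin H → Bool =>
            (T0.filter (fun i => f i = true)).card = ω - lam1 ∧
            (T1.filter (fun i => f i = true)).card = lam' - lam1 ∧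
            (T2.filter (fun i => f i = true)).card = a + 2 * lam1 - (ω + lam')) := by
      rw [Finset.filter_filter]
      apply Finset.filter_congr
      intro f _
      have h2 := fact2 f
      have h3 := fact3 f
      have h4 := fact4 f
      constructor
      · rintro ⟨⟨hw, hag⟩, h0⟩
        omega
      · rintro ⟨e0, e1, e2⟩
        omega
    rw [hfilter2, count_triple T0 T1 T2 h01 h02 h12 hcover, hT0card, hT1card, hT2card]
    have c1 : (r : ℤ) - ω = ((r - ω : ℕ) : ℤ) := by omega
    have c2 : (lam' : ℤ) - lam1 = ((lam' - lam1 : ℕ) : ℤ) := by omega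
    have c3 : (H : ℤ) - r = ((H - r : ℕ) : ℤ) := by omega
    have c4 : (a : ℤ) - ω + 2 * lam1 - lam' = ((a + 2 * lam1 - (ω + lam') : ℕ) : ℤ) := by
      omega
    rw [c1, c2, c3, c4, zchoose_natCast, zchoose_natCast, zchoose_natCast,
      Nat.choose_symm hlam1ω]
    ring
  · -- empty case
    have hzero : zchoose ((H : ℤ) - r) ((a : ℤ) - ω + 2 * lam1 - lam') = 0 := by
      unfold zchoose
      rw [if_neg]
      omega
    rw [hzero, Nat.mul_zero]
    rw [Finset.card_eq_zero, Finset.filter_filter]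
    rw [Finset.filter_eq_empty_iff]
    intro f _
    rintro ⟨⟨hw, hag⟩, h0⟩
    have h2 := fact2 f
    have h3 := fact3 f
    have h4 := fact4 f
    omega
end

section
/- In Construction 1 with λ = 1 and ω = 1, the number of stars remaining in each column after deleting useless stars is Z - Z' where F1 = C(H,a), the useless-star count is Z' = C(H-r, a-1), the non-star count per column is C(H-r, a) + (r-1)·C(H-r, a-2), and hence the induced scheme has memory ratio M/N = 1 - (C(H-r,a) + (r-1)·C(H-r,a-2))/(C(H,a) - C(H-r,a-1)) and subpacketization F = C(H,a) - C(H-r,a-1). -/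
open scoped Classical

lemma count_fixed {H : ℕ} (T K : Finset (Fin H)) (hK : K ⊆ T) (a : ℕ) (hKa : K.card ≤ a) :
    (Finset.univ.filter (fun f : Fin H → Bool =>
        wt f = a ∧ ∀ i ∈ T, (f i = true ↔ i ∈ K))).card
      = Nat.choose (H - T.card) (a - K.card) := by
  have hcard : ((Finset.univ \ T).powersetCard (a - K.card)).card
      = Nat.choose (H - T.card) (a - K.card) := by
    rw [Finset.card_powersetCard, Finset.card_sdiff_of_subset (Finset.subset_univ T),
      Finset.card_univ, Fintype.card_fin]
  rw [← hcard]
  apply Finset.card_bij' (fun f _ => Finset.univ.filter (fun j => f j = true ∧ j ∉ T))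
    (fun S _ => fun i => decide (i ∈ K ∪ S))
  · intro f hf
    simp only [Finset.mem_filter, Finset.mem_univ, true_and] at hf
    obtain ⟨hw, hft⟩ := hf
    have hsup : Finset.univ.filter (fun i => f i = true)
        = K ∪ Finset.univ.filter (fun j => f j = true ∧ j ∉ T) := by
      ext i
      simp only [Finset.mem_filter, Finset.mem_univ, true_and, Finset.mem_union]
      constructor
      · intro hfi
        by_cases hiT : i ∈ T
        · exact Or.inl ((hft i hiT).1 hfi)
        · exact Or.inr ⟨hfi, hiT⟩
      · rintro (hiK | ⟨hfi, _⟩)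
        · exact (hft i (hK hiK)).2 hiK
        · exact hfi
    have hdisj : Disjoint K (Finset.univ.filter (fun j => f j = true ∧ j ∉ T)) := by
      rw [Finset.disjoint_left]
      intro i hiK hi
      simp only [Finset.mem_filter] at hi
      exact hi.2.2 (hK hiK)
    have hc : a = K.card + (Finset.univ.filter (fun j => f j = true ∧ j ∉ T)).card := by
      rw [← hw]
      unfold wt
      rw [hsup, Finset.card_union_of_disjoint hdisj]
    simp only [Finset.mem_powersetCard]
    constructor
    · intro j hj
      simp only [Finset.mem_filter] at hj
      simp only [Finset.mem_sdiff, Finset.mem_univ, true_and]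
      exact hj.2.2
    · omega
  · intro S hS
    simp only [Finset.mem_powersetCard] at hS
    obtain ⟨hSsub, hScard⟩ := hS
    have hSdT : ∀ j ∈ S, j ∉ T := by
      intro j hj
      have := hSsub hj
      simp only [Finset.mem_sdiff] at this
      exact this.2
    simp only [Finset.mem_filter, Finset.mem_univ, true_and]
    constructor
    · unfold wt
      have : (Finset.univ.filter (fun i => decide (i ∈ K ∪ S) = true)) = K ∪ S := by
        ext i; simp
      rw [this, Finset.card_union_of_disjoint]
      · omega
      · rw [Finset.disjoint_left]
        intro i hiK hiS
        exact hSdT i hiS (hK hiK)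
    · intro i hiT
      simp only [decide_eq_true_eq, Finset.mem_union]
      constructor
      · rintro (h | h)
        · exact h
        · exact absurd hiT (hSdT i h)
      · exact Or.inl
  · intro f hf
    simp only [Finset.mem_filter, Finset.mem_univ, true_and] at hf
    funext i
    simp only [Finset.mem_union, Finset.mem_filter, Finset.mem_univ, true_and]
    by_cases hiT : i ∈ T
    · by_cases hfi : f i = true
      · simp [hfi, (hf.2 i hiT).1 hfi]
      · have : i ∉ K := fun h => hfi ((hf.2 i hiT).2 h)
        simp at hfi
        simp [hfi, this, hiT]
    · by_cases hfi : f i = true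
      · simp [hfi, hiT]
      · have : i ∉ K := fun h => hiT (hK h)
        simp at hfi
        simp [hfi, this, hiT]
  · intro S hS
    simp only [Finset.mem_powersetCard] at hS
    ext j
    simp only [Finset.mem_filter, Finset.mem_univ, true_and, decide_eq_true_eq,
      Finset.mem_union]
    constructor
    · rintro ⟨h | h, hjT⟩
      · exact absurd (hK h) hjT
      · exact h
    · intro hjS
      have := hS.1 hjS
      simp only [Finset.mem_sdiff] at this
      exact ⟨Or.inr hjS, this.2⟩

lemma count_fixed_empty {H : ℕ} (T K : Finset (Fin H)) (hK : K ⊆ T) (a : ℕ) (hKa : a < K.card) :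
    (Finset.univ.filter (fun f : Fin H → Bool =>
        wt f = a ∧ ∀ i ∈ T, (f i = true ↔ i ∈ K))).card = 0 := by
  rw [Finset.card_eq_zero, Finset.filter_eq_empty_iff]
  rintro f - ⟨hw, hft⟩
  have : K ⊆ Finset.univ.filter (fun i => f i = true) := by
    intro i hi
    simp only [Finset.mem_filter, Finset.mem_univ, true_and]
    exact (hft i (hK hi)).2 hi
  have := Finset.card_le_card this
  unfold wt at hw
  omega

lemma v2_eq (H r a : ℕ) (hrH : r ≤ H) :
    zchoose ((H:ℤ) - r) ((a:ℤ) - 2) = if 2 ≤ a then Nat.choose (H - r) (a - 2) else 0 := by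
  unfold zchoose
  split_ifs with h1 h2 h2
  · congr 1 <;> omega
  · omega
  · symm; apply Nat.choose_eq_zero_of_lt; omega
  · rfl

/-- The on-`T` support pattern of a row whose unique agreement point with `b` is `c`. -/
def Kfun {H : ℕ} (b : Fin H → Bool) (t0 : Fin H) (c : Fin H) : Finset (Fin H) :=
  if b c = true then {c, t0} else ∅

/-- Construction 1 with `λ = ω = 1`. Fix a column `(T, b)` (`|T| = r`, `wt(b) = r-1`).
Then: the number of rows (`F1` = number of weight-`a` vectors) is `C(H,a)`; the useless
stars of the column number `Z' = C(H-r, a-1)` (rows `f` with `d(f|_T,b) > r-1`); the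
non-star entries number `C(H-r,a) + (r-1)·C(H-r,a-2)`; the subpacketization is
`F = F1 - Z' = C(H,a) - C(H-r,a-1)`; and the memory ratio, `(Z-Z')/(F1-Z')` with `Z` the
per-column star count, equals `1 - (C(H-r,a)+(r-1)·C(H-r,a-2))/(C(H,a)-C(H-r,a-1))`. -/
theorem stmt17 (H r a : ℕ) (hr : 1 ≤ r) (hrH : r < H) (ha : 1 ≤ a) (haH : a < H)
    (T : Finset (Fin H)) (hT : T.card = r) (b : Fin H → Bool)
    (hb : (T.filter (fun i => b i = true)).card = r - 1)
    (hb0 : ∀ i ∉ T, b i = false) :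
    (Finset.univ.filter (fun f : Fin H → Bool => wt f = a)).card = Nat.choose H a
    ∧ (Finset.univ.filter (fun f : Fin H → Bool =>
          wt f = a ∧ distOn T f b > r - 1)).card = Nat.choose (H - r) (a - 1)
    ∧ (Finset.univ.filter (fun f : Fin H → Bool =>
          wt f = a ∧ distOn T f b = r - 1)).card
        = Nat.choose (H - r) a + (r - 1) * zchoose ((H : ℤ) - r) ((a : ℤ) - 2)
    ∧ -- subpacketization `F = F1 - Z' = C(H,a) - C(H-r,a-1)` (with `λ = 1` multiplier)
      (Finset.univ.filter (fun f : Fin H → Bool => wt f = a)).card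
          - (Finset.univ.filter (fun f : Fin H → Bool =>
              wt f = a ∧ distOn T f b > r - 1)).card
        = Nat.choose H a - Nat.choose (H - r) (a - 1)
    ∧ (((Finset.univ.filter (fun f : Fin H → Bool =>
            wt f = a ∧ distOn T f b ≠ r - 1)).card : ℚ)
          - Nat.choose (H - r) (a - 1))
        / ((Nat.choose H a : ℚ) - Nat.choose (H - r) (a - 1))
      = 1 - ((Nat.choose (H - r) a : ℚ)
              + ((r : ℚ) - 1) * zchoose ((H : ℤ) - r) ((a : ℤ) - 2))
            / ((Nat.choose H a : ℚ) - Nat.choose (H - r) (a - 1)) := by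
  -- the unique position t0 of T where b is false
  have hsplitT : (T.filter (fun i => b i = true)).card
      + (T.filter (fun i => ¬ b i = true)).card = T.card :=
    Finset.card_filter_add_card_filter_not _
  have hT0card : (T.filter (fun i => ¬ b i = true)).card = 1 := by omega
  obtain ⟨t0, ht0⟩ := Finset.card_eq_one.mp hT0card
  have ht0mem : t0 ∈ T.filter (fun i => ¬ b i = true) := ht0 ▸ Finset.mem_singleton_self t0
  have ht0T : t0 ∈ T := (Finset.mem_filter.mp ht0mem).1
  have hbt0 : b t0 = false := by
    have := (Finset.mem_filter.mp ht0mem).2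
    simpa using this
  have huniq : ∀ i ∈ T, b i = false → i = t0 := by
    intro i hiT hbi
    have : i ∈ T.filter (fun i => ¬ b i = true) := by
      simp [Finset.mem_filter, hiT, hbi]
    rw [ht0] at this
    exact Finset.mem_singleton.mp this
  -- Part 1: total rows
  have h1 : (Finset.univ.filter (fun f : Fin H → Bool => wt f = a)).card = Nat.choose H a := by
    have hcf := count_fixed (∅ : Finset (Fin H)) ∅ (subset_refl _) a (by simp)
    have heq : (Finset.univ.filter (fun f : Fin H → Bool => wt f = a))
        = (Finset.univ.filter (fun f : Fin H → Bool =>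
            wt f = a ∧ ∀ i ∈ (∅ : Finset (Fin H)), (f i = true ↔ i ∈ (∅ : Finset (Fin H))))) := by
      ext f; simp
    rw [heq, hcf]
    simp
  -- Part 2: useless stars
  have h2 : (Finset.univ.filter (fun f : Fin H → Bool =>
        wt f = a ∧ distOn T f b > r - 1)).card = Nat.choose (H - r) (a - 1) := by
    have hset2 : (Finset.univ.filter (fun f : Fin H → Bool =>
          wt f = a ∧ distOn T f b > r - 1))
        = (Finset.univ.filter (fun f : Fin H → Bool =>
            wt f = a ∧ ∀ i ∈ T, (f i = true ↔ i ∈ ({t0} : Finset (Fin H))))) := by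
      ext f
      simp only [Finset.mem_filter, Finset.mem_univ, true_and, Finset.mem_singleton]
      refine and_congr_right fun _ => ?_
      constructor
      · intro hd
        have hle : distOn T f b ≤ r := by
          rw [← hT]; exact Finset.card_le_card (Finset.filter_subset _ _)
        have hdr : (T.filter (fun i => f i ≠ b i)).card = r := by
          unfold distOn at hd hle; omega
        have hall : T.filter (fun i => f i ≠ b i) = T :=
          Finset.eq_of_subset_of_card_le (Finset.filter_subset _ _) (by rw [hdr, hT])
        have hne : ∀ i ∈ T, f i ≠ b i := by
          intro i hiT
          have hmem' : i ∈ T.filter (fun i => f i ≠ b i) := by rw [hall]; exact hiT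
          exact (Finset.mem_filter.mp hmem').2
        intro i hiT
        constructor
        · intro hfi
          by_contra hit
          have hbi : b i = true := by
            cases hbv : b i
            · exact absurd (huniq i hiT hbv) hit
            · rfl
          exact hne i hiT (hfi.trans hbi.symm)
        · intro hit
          rw [hit]
          cases hfv : f t0
          · exact absurd (hfv.trans hbt0.symm) (hne t0 ht0T)
          · rfl
      · intro hf
        have hall : T.filter (fun i => f i ≠ b i) = T := by
          apply Finset.filter_true_of_mem
          intro i hiT
          by_cases hit : i = t0
          · have hfi : f i = true := (hf i hiT).2 (by simp [hit])
            have hbi : b i = false := by rw [hit]; exact hbt0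
            rw [hfi, hbi]; simp
          · have hbi : b i = true := by
              cases hbv : b i
              · exact absurd (huniq i hiT hbv) hit
              · rfl
            have hfi : f i = false := by
              cases hfv : f i
              · rfl
              · exact absurd ((hf i hiT).1 hfv) hit
            rw [hfi, hbi]; simp
        unfold distOn
        rw [hall, hT]
        omega
    rw [hset2, count_fixed T {t0} (Finset.singleton_subset_iff.mpr ht0T) a
      (by simpa using ha), hT, Finset.card_singleton]
  -- membership description of Kfun
  have hmem : ∀ c ∈ T, ∀ i ∈ T,
      (i ∈ Kfun b t0 c ↔ (if i = c then b i else !b i) = true) := by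
    intro c hc i hiT
    by_cases hbc : b c = true
    · have hct0 : c ≠ t0 := by
        intro h; rw [h, hbt0] at hbc; exact Bool.noConfusion hbc
      simp only [Kfun, if_pos hbc, Finset.mem_insert, Finset.mem_singleton]
      by_cases hic : i = c
      · subst hic; simp [hbc]
      · simp only [hic, false_or, if_neg hic]
        by_cases hit : i = t0
        · subst hit; simp [hbt0]
        · have hbi : b i = true := by
            cases hbv : b i
            · exact absurd (huniq i hiT hbv) hit
            · rfl
          simp [hbi, hit]
    · have hbcf : b c = false := by simpa using hbc
      have hct0 : c = t0 := huniq c hc hbcf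
      simp only [Kfun, if_neg hbc, Finset.notMem_empty, false_iff]
      by_cases hic : i = c
      · subst hic; simp [hbcf]
      · have hbi : b i = true := by
          cases hbv : b i
          · exact absurd (huniq i hiT hbv) (hct0 ▸ hic)
          · rfl
        simp [hic, hbi]
  -- key: a row matching pattern c disagrees with b exactly on T \ {c}
  have hstep : ∀ c ∈ T, ∀ f : Fin H → Bool,
      (∀ i ∈ T, (f i = true ↔ i ∈ Kfun b t0 c)) →
      T.filter (fun i => f i ≠ b i) = T \ {c} := by
    intro c hc f hf
    ext i
    simp only [Finset.mem_filter, Finset.mem_sdiff, Finset.mem_singleton, ne_eq]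
    refine and_congr_right fun hiT => ?_
    have hfi : f i = (if i = c then b i else !b i) := by
      rw [Bool.eq_iff_iff]
      simp only [← (hmem c hc i hiT)]
      exact hf i hiT
    rw [hfi]
    by_cases hic : i = c
    · simp [hic]
    · simp [hic]
  -- Part 3: non-stars
  have h3 : (Finset.univ.filter (fun f : Fin H → Bool =>
        wt f = a ∧ distOn T f b = r - 1)).card
      = Nat.choose (H - r) a + (r - 1) * zchoose ((H : ℤ) - r) ((a : ℤ) - 2) := by
    have hset3 : (Finset.univ.filter (fun f : Fin H → Bool =>
          wt f = a ∧ distOn T f b = r - 1))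
        = T.biUnion (fun c => Finset.univ.filter (fun f : Fin H → Bool =>
            wt f = a ∧ ∀ i ∈ T, (f i = true ↔ i ∈ Kfun b t0 c))) := by
      ext f
      simp only [Finset.mem_filter, Finset.mem_biUnion, Finset.mem_univ, true_and]
      constructor
      · rintro ⟨hw, hd⟩
        have hsum : (T.filter (fun i => f i = b i)).card
            + (T.filter (fun i => ¬ f i = b i)).card = T.card :=
          Finset.card_filter_add_card_filter_not _
        have hdd : (T.filter (fun i => ¬ f i = b i)).card = r - 1 := hd
        have hag : (T.filter (fun i => f i = b i)).card = 1 := by omega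
        obtain ⟨c, hc⟩ := Finset.card_eq_one.mp hag
        have hcmem : c ∈ T.filter (fun i => f i = b i) := hc ▸ Finset.mem_singleton_self c
        have hcT : c ∈ T := (Finset.mem_filter.mp hcmem).1
        have hfc : f c = b c := (Finset.mem_filter.mp hcmem).2
        have hagree : ∀ i ∈ T, (f i = b i ↔ i = c) := by
          intro i hiT
          constructor
          · intro h
            have : i ∈ T.filter (fun i => f i = b i) := Finset.mem_filter.mpr ⟨hiT, h⟩
            rw [hc] at this
            exact Finset.mem_singleton.mp this
          · rintro rfl; exact hfc
        refine ⟨c, hcT, hw, fun i hiT => ?_⟩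
        rw [hmem c hcT i hiT]
        by_cases hic : i = c
        · subst hic
          simp [hfc]
        · simp only [if_neg hic]
          have : ¬ f i = b i := fun h => hic ((hagree i hiT).1 h)
          constructor
          · intro hfi
            cases hbv : b i
            · rfl
            · exact absurd (hfi.trans hbv.symm) this
          · intro hbn
            cases hfv : f i
            · cases hbv : b i
              · exact absurd (hfv.trans hbv.symm) this
              · rw [hbv] at hbn; exact Bool.noConfusion hbn
            · rfl
      · rintro ⟨c, hcT, hw, hf⟩
        refine ⟨hw, ?_⟩
        unfold distOn
        rw [hstep c hcT f hf, Finset.card_sdiff_of_subset (Finset.singleton_subset_iff.mpr hcT),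
          hT, Finset.card_singleton]
    rw [hset3, Finset.card_biUnion]
    · -- sum over agreement points
      have hAc : ∀ c ∈ T, (Finset.univ.filter (fun f : Fin H → Bool =>
            wt f = a ∧ ∀ i ∈ T, (f i = true ↔ i ∈ Kfun b t0 c))).card
          = if b c = true then zchoose ((H:ℤ) - r) ((a:ℤ) - 2)
            else Nat.choose (H - r) a := by
        intro c hcT
        by_cases hbc : b c = true
        · have hct0 : c ≠ t0 := by
            intro h; rw [h, hbt0] at hbc; exact Bool.noConfusion hbc
          have hKeq : Kfun b t0 c = {c, t0} := by simp [Kfun, hbc]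
          have hKsub : Kfun b t0 c ⊆ T := by
            rw [hKeq]
            intro i hi
            rcases Finset.mem_insert.mp hi with h | h
            · exact h ▸ hcT
            · exact (Finset.mem_singleton.mp h) ▸ ht0T
          have hKcard : (Kfun b t0 c).card = 2 := by
            rw [hKeq, Finset.card_insert_of_notMem (by simpa using hct0),
              Finset.card_singleton]
          rw [if_pos hbc, v2_eq H r a (le_of_lt hrH)]
          by_cases h2a : 2 ≤ a
          · rw [if_pos h2a, ← hT, ← hKcard]
            exact count_fixed T _ hKsub a (hKcard ▸ h2a)
          · rw [if_neg h2a]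
            exact count_fixed_empty T _ hKsub a (by omega)
        · rw [if_neg hbc]
          have hKeq : Kfun b t0 c = ∅ := by simp [Kfun, hbc]
          have := count_fixed T (Kfun b t0 c) (hKeq ▸ Finset.empty_subset T) a
            (by rw [hKeq]; simp)
          rw [this, hKeq, hT]
          simp
      rw [Finset.sum_congr rfl hAc, Finset.sum_ite, Finset.sum_const, Finset.sum_const,
        hb, hT0card]
      simp only [smul_eq_mul, one_mul]
      ring
    · -- disjointness
      intro c hc c' hc' hne
      rw [Function.onFun, Finset.disjoint_left]
      intro f hf hf'
      simp only [Finset.mem_filter, Finset.mem_univ, true_and] at hf hf'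
      have e1 := hstep c hc f hf.2
      have e2 := hstep c' hc' f hf'.2
      have : (T \ {c} : Finset (Fin H)) = T \ {c'} := e1 ▸ e2
      have hcnot : c ∉ (T \ {c} : Finset (Fin H)) := by simp
      rw [this] at hcnot
      simp only [Finset.mem_sdiff, Finset.mem_singleton, not_and, not_not] at hcnot
      exact hne (hcnot hc)
  -- D > 0
  have hD : Nat.choose (H - r) (a - 1) < Nat.choose H a := by
    obtain ⟨H', rfl⟩ : ∃ H', H = H' + 1 := ⟨H - 1, by omega⟩
    obtain ⟨a', rfl⟩ : ∃ a', a = a' + 1 := ⟨a - 1, by omega⟩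
    have hc1 : Nat.choose (H' + 1 - r) a' ≤ Nat.choose H' a' :=
      Nat.choose_le_choose _ (by omega)
    have hc2 : 0 < Nat.choose H' (a' + 1) := Nat.choose_pos (by omega)
    have hc3 : Nat.choose (H' + 1) (a' + 1) = Nat.choose H' a' + Nat.choose H' (a' + 1) :=
      Nat.choose_succ_succ _ _
    simp only [Nat.add_sub_cancel]
    omega
  refine ⟨h1, h2, h3, by rw [h1, h2], ?_⟩
  -- Part 5
  have hkey : (Finset.univ.filter (fun f : Fin H → Bool =>
        wt f = a ∧ distOn T f b = r - 1)).card
      + (Finset.univ.filter (fun f : Fin H → Bool =>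
        wt f = a ∧ distOn T f b ≠ r - 1)).card
      = (Finset.univ.filter (fun f : Fin H → Bool => wt f = a)).card := by
    rw [← Finset.filter_filter, ← Finset.filter_filter]
    exact Finset.card_filter_add_card_filter_not _
  have hX : ((Finset.univ.filter (fun f : Fin H → Bool =>
        wt f = a ∧ distOn T f b ≠ r - 1)).card : ℚ)
      = (Nat.choose H a : ℚ) - ((Nat.choose (H - r) a : ℚ)
          + ((r : ℚ) - 1) * zchoose ((H : ℤ) - r) ((a : ℤ) - 2)) := by
    rw [h3, h1] at hkey
    have hcast := congrArg (fun n : ℕ => (n : ℚ)) hkey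
    push_cast at hcast
    have hr1 : ((r - 1 : ℕ) : ℚ) = (r : ℚ) - 1 := by
      push_cast [Nat.cast_sub hr]; ring
    rw [hr1] at hcast
    linarith
  have hDne : (Nat.choose H a : ℚ) - (Nat.choose (H - r) (a - 1) : ℚ) ≠ 0 := by
    have : (Nat.choose (H - r) (a - 1) : ℚ) < (Nat.choose H a : ℚ) := by
      exact_mod_cast hD
    linarith
  rw [hX]
  field_simp
  ring
end
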